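/- Let M and N be real numbers with −6 < N < 3, N ∉ {−4, −1, 0, 2}, and M ∉ {1, −2}. Then det G(M,N) < 0, and consequently the real symmetric matrix G(M,N) is indefinite: there exist vectors u, v ∈ ℝ⁴ with uᵀ G(M,N) u > 0 and vᵀ G(M,N) v < 0. -/

import Mathlib

open Matrix

/-- The metric `G(M,N)` on the space of the four quartic couplings. -/
noncomputable def Gmat (M N : ℝ) : Matrix (Fin 4) (Fin 4) ℝ :=
  let G11 := (M*N^4 + 3*M*N^3 + 2*N^3 - 2*M*N^2 - 4*N^2 - 12*M*N - 24*N + 24*M + 48) / (2*N^2)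
  let G12 := (N^4 + M*N^3 + 4*N^3 - 2*M*N^2 - 4*N^2 - 12*M*N - 24*N + 24*M + 48) / (2*N^2)
  let G13 := 2 * (M*N^2 + N^2 + M*N + 2*N - 2*M - 4) / N
  let G14 := 2 * (2*N^2 + M*N + 2*N - 2*M - 4) / N
  let G22 := (M*N^4 + N^4 + 4*M*N^3 + 6*N^3 - 4*M*N^2 - 8*N^2 - 24*M*N - 48*N + 48*M + 96) / (4*N^2)
  let G23 := (M*N^2 + 3*N^2 + 2*M*N + 4*N - 4*M - 8) / N
  let G24 := 2 * (M*N^2 + N^2 + M*N + 2*N - 2*M - 4) / N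
  let G33 := (M*N^3 + N^3 + M*N^2 + N^2 + 4*N) / N
  let G34 := 2 * (N^2 + N + 2*M)
  let G44 := 2 * (4 - 2*M + M*N + M*N^2)
  !![G11, G12, G13, G14;
     G12, G22, G23, G24;
     G13, G23, G33, G34;
     G14, G24, G34, G44]

private lemma gmat_isHermitian (M N : ℝ) : (Gmat M N).IsHermitian := by
  ext i j
  fin_cases i <;> fin_cases j <;> simp [Gmat, Matrix.conjTranspose_apply]

private lemma det_nonneg_of_posSemidef {A : Matrix (Fin 4) (Fin 4) ℝ}
    (h : A.PosSemidef) : 0 ≤ A.det := by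
  rw [h.1.det_eq_prod_eigenvalues]
  exact Finset.prod_nonneg fun i _ => h.eigenvalues_nonneg i

set_option maxHeartbeats 1000000 in
private lemma det_fin_four' {R : Type*} [CommRing R] (A : Matrix (Fin 4) (Fin 4) R) :
    A.det =
      A 0 0 * A 1 1 * A 2 2 * A 3 3 - A 0 0 * A 1 1 * A 2 3 * A 3 2 -
        A 0 0 * A 1 2 * A 2 1 * A 3 3 + A 0 0 * A 1 2 * A 2 3 * A 3 1 +
        A 0 0 * A 1 3 * A 2 1 * A 3 2 - A 0 0 * A 1 3 * A 2 2 * A 3 1 -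
        A 0 1 * A 1 0 * A 2 2 * A 3 3 + A 0 1 * A 1 0 * A 2 3 * A 3 2 +
        A 0 1 * A 1 2 * A 2 0 * A 3 3 - A 0 1 * A 1 2 * A 2 3 * A 3 0 -
        A 0 1 * A 1 3 * A 2 0 * A 3 2 + A 0 1 * A 1 3 * A 2 2 * A 3 0 +
        A 0 2 * A 1 0 * A 2 1 * A 3 3 - A 0 2 * A 1 0 * A 2 3 * A 3 1 -
        A 0 2 * A 1 1 * A 2 0 * A 3 3 + A 0 2 * A 1 1 * A 2 3 * A 3 0 +
        A 0 2 * A 1 3 * A 2 0 * A 3 1 - A 0 2 * A 1 3 * A 2 1 * A 3 0 -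
        A 0 3 * A 1 0 * A 2 1 * A 3 2 + A 0 3 * A 1 0 * A 2 2 * A 3 1 +
        A 0 3 * A 1 1 * A 2 0 * A 3 2 - A 0 3 * A 1 1 * A 2 2 * A 3 0 -
        A 0 3 * A 1 2 * A 2 0 * A 3 1 + A 0 3 * A 1 2 * A 2 1 * A 3 0 := by
  simp [Matrix.det_succ_row_zero, Fin.sum_univ_succ]
  simp only [show Fin.succAbove (3:Fin 4) 2 = 2 from rfl, show Fin.succAbove (2:Fin 4) 2 = 3 from rfl,
    show Fin.succAbove (1:Fin 4) 2 = 3 from rfl]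
  ring

set_option maxHeartbeats 4000000 in
set_option maxRecDepth 100000 in
private lemma gmat_det (M N : ℝ) (hN₅ : N ≠ 0) :
    (Gmat M N).det =
      (1/4) * (M-1)^2 * (M+2)^2 * (N-2)^2 * (N+1)^2 * (N+4)^2 * (N-3) * (N+6) := by
  rw [det_fin_four']
  simp only [Gmat, Matrix.cons_val', Matrix.cons_val_zero, Matrix.cons_val_one,
    Matrix.head_cons, Matrix.empty_val', Matrix.cons_val_fin_one, Matrix.head_fin_const,
    Matrix.of_apply, Matrix.cons_val_succ, Fin.isValue, Matrix.cons_val]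
  field_simp
  ring

/-- For `−6 < N < 3` with `N ∉ {−4, −1, 0, 2}` and `M ∉ {1, −2}`, the metric
`G(M,N)` has negative determinant, so it is indefinite: its quadratic form
takes both positive and negative values. -/
theorem stmt11 (M N : ℝ) (hN₁ : -6 < N) (hN₂ : N < 3)
    (hN₃ : N ≠ -4) (hN₄ : N ≠ -1) (hN₅ : N ≠ 0) (hN₆ : N ≠ 2)
    (hM₁ : M ≠ 1) (hM₂ : M ≠ -2) :
    (Gmat M N).det < 0 ∧
      ∃ u v : Fin 4 → ℝ,
        0 < u ⬝ᵥ ((Gmat M N) *ᵥ u) ∧ v ⬝ᵥ ((Gmat M N) *ᵥ v) < 0 := by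
  have hdet : (Gmat M N).det < 0 := by
    rw [gmat_det M N hN₅]
    have hA : 0 < (M-1)^2 :=
      lt_of_le_of_ne (sq_nonneg _) (Ne.symm (pow_ne_zero 2 (sub_ne_zero.mpr hM₁)))
    have hB : 0 < (M+2)^2 := by
      have : M + 2 ≠ 0 := fun h => hM₂ (by linarith)
      exact lt_of_le_of_ne (sq_nonneg _) (Ne.symm (pow_ne_zero 2 this))
    have hC : 0 < (N-2)^2 :=
      lt_of_le_of_ne (sq_nonneg _) (Ne.symm (pow_ne_zero 2 (sub_ne_zero.mpr hN₆)))
    have hD : 0 < (N+1)^2 := by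
      have : N + 1 ≠ 0 := fun h => hN₄ (by linarith)
      exact lt_of_le_of_ne (sq_nonneg _) (Ne.symm (pow_ne_zero 2 this))
    have hE : 0 < (N+4)^2 := by
      have : N + 4 ≠ 0 := fun h => hN₃ (by linarith)
      exact lt_of_le_of_ne (sq_nonneg _) (Ne.symm (pow_ne_zero 2 this))
    have hneg : (N-3)*(N+6) < 0 :=
      mul_neg_of_neg_of_pos (by linarith) (by linarith)
    have key : (M-1)^2*(M+2)^2*(N-2)^2*(N+1)^2*(N+4)^2 * ((N-3)*(N+6)) < 0 :=
      mul_neg_of_pos_of_neg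
        (mul_pos (mul_pos (mul_pos (mul_pos hA hB) hC) hD) hE) hneg
    nlinarith [key]
  refine ⟨hdet, ?_⟩
  have hu : ∃ u : Fin 4 → ℝ, 0 < u ⬝ᵥ ((Gmat M N) *ᵥ u) := by
    by_contra h
    push_neg at h
    have hps : (-(Gmat M N)).PosSemidef := by
      refine Matrix.posSemidef_iff_dotProduct_mulVec.mpr ⟨(gmat_isHermitian M N).neg, fun x => ?_⟩
      have := h x
      simp only [star_trivial, Matrix.neg_mulVec, dotProduct_neg]
      linarith
    have := det_nonneg_of_posSemidef hps
    rw [Matrix.det_neg] at this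
    simp at this
    linarith
  have hv : ∃ v : Fin 4 → ℝ, v ⬝ᵥ ((Gmat M N) *ᵥ v) < 0 := by
    by_contra h
    push_neg at h
    have hps : (Gmat M N).PosSemidef := Matrix.posSemidef_iff_dotProduct_mulVec.mpr ⟨gmat_isHermitian M N, fun x => by
      simpa using h x⟩
    have := det_nonneg_of_posSemidef hps
    linarith
  obtain ⟨u, hu⟩ := hu
  obtain ⟨v, hv⟩ := hv
  exact ⟨u, v, hu, hv⟩
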